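/- For nonnegative integers k, r, t, x with t ≤ r, the identity C_q(x,t)·C_q(k−x, r−t) = ∑_{i=t}^{r} (−1)^{i−t} q^{(i−t)(k−x−r+t)+binom(i−t+1,2)} C_q(i,t) C_q(k−i, r−i) C_q(x,i) holds. -/

import Mathlib

/-- The Gaussian binomial coefficient `C_q(a,k)`, extended to integer arguments,
with value `0` when `k < 0`. -/
noncomputable def gbinom (q : ℝ) (a k : ℤ) : ℝ :=
  if k < 0 then 0
  else ∏ i ∈ Finset.range k.toNat, (q ^ (a - k + i + 1) - 1) / (q ^ ((i : ℤ) + 1) - 1)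

noncomputable def gnum (q : ℝ) (a : ℤ) (n : ℕ) : ℝ :=
  ∏ i ∈ Finset.range n, (q ^ (a - n + i + 1) - 1)

noncomputable def gden (q : ℝ) (n : ℕ) : ℝ :=
  ∏ i ∈ Finset.range n, (q ^ ((i : ℤ) + 1) - 1)

lemma zpow_ne_one {q : ℝ} (hq : 1 < q) {z : ℤ} (hz : 0 < z) : q ^ z - 1 ≠ 0 := by
  have : 1 < q ^ z := one_lt_zpow₀ hq hz
  linarith

lemma gden_ne_zero {q : ℝ} (hq : 1 < q) (n : ℕ) : gden q n ≠ 0 := by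
  refine Finset.prod_ne_zero_iff.2 fun i _ => zpow_ne_one hq (by omega)

lemma gbinom_nat (q : ℝ) (a : ℤ) (n : ℕ) :
    gbinom q a (n : ℤ) = gnum q a n / gden q n := by
  rw [gbinom, if_neg (by omega), Int.toNat_natCast, gnum, gden,
    Finset.prod_div_distrib]

lemma gbinom_neg (q : ℝ) (a b : ℤ) (h : b < 0) : gbinom q a b = 0 := by
  rw [gbinom, if_pos h]

lemma gbinom_zero (q : ℝ) (a : ℤ) : gbinom q a 0 = 1 := by
  rw [gbinom, if_neg (by norm_num)]
  simp

lemma gnum_succ_top (q : ℝ) (a : ℤ) (n : ℕ) :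
    gnum q a (n + 1) = (q ^ a - 1) * gnum q (a - 1) n := by
  rw [gnum, Finset.prod_range_succ, mul_comm]
  congr 1
  · congr 1; congr 1; push_cast; ring
  · rw [gnum]
    refine Finset.prod_congr rfl fun i _ => ?_
    congr 2; push_cast; ring

lemma gnum_succ_bot (q : ℝ) (a : ℤ) (n : ℕ) :
    gnum q (a - 1) (n + 1) = (q ^ (a - (n + 1)) - 1) * gnum q (a - 1) n := by
  rw [gnum, Finset.prod_range_succ', mul_comm]
  congr 1
  · congr 1; congr 1; push_cast; ring
  · rw [gnum]
    refine Finset.prod_congr rfl fun i _ => ?_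
    congr 2; push_cast; ring

lemma gden_succ (q : ℝ) (n : ℕ) :
    gden q (n + 1) = (q ^ ((n : ℤ) + 1) - 1) * gden q n := by
  rw [gden, Finset.prod_range_succ, mul_comm, gden]

lemma pascal {q : ℝ} (hq : 1 < q) (a b : ℤ) (hb : 0 ≤ b) :
    gbinom q a b = gbinom q (a - 1) b + q ^ (a - b) * gbinom q (a - 1) (b - 1) := by
  have hq0 : (0:ℝ) < q := lt_trans one_pos hq
  lift b to ℕ using hb
  cases' b with n
  · rw [show ((0:ℕ):ℤ) = 0 by norm_num]
    rw [gbinom_zero, gbinom_zero, show (0:ℤ)-1 = -1 by ring, gbinom_neg q (a-1) (-1) (by norm_num)]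
    ring
  · have h1 : ((n+1:ℕ):ℤ) - 1 = (n:ℤ) := by push_cast; ring
    rw [h1, gbinom_nat, gbinom_nat, gbinom_nat, gnum_succ_top, gden_succ,
      show gnum q (a-1) (n+1) = (q ^ (a - ((n:ℕ)+1:ℕ)) - 1) * gnum q (a-1) n from gnum_succ_bot q a n]
    have hd1 : q ^ ((n:ℤ) + 1) - 1 ≠ 0 := zpow_ne_one hq (by omega)
    have hd2 : gden q n ≠ 0 := gden_ne_zero hq n
    have key : q ^ a = q ^ (a - ((n:ℤ)+1)) * q ^ ((n:ℤ) + 1) := by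
      rw [← zpow_add₀ (ne_of_gt hq0)]
      congr 1; ring
    push_cast
    rw [key]
    set X := q ^ (a - ((n:ℤ)+1)) with hX
    set Y := q ^ ((n:ℤ)+1) with hY
    field_simp
    ring

lemma gbinom_eq_zero (q : ℝ) (a b : ℕ) (h : a < b) : gbinom q (a:ℤ) (b:ℤ) = 0 := by
  rw [gbinom_nat, gnum, Finset.prod_eq_zero (Finset.mem_range.2 (show b - a - 1 < b by omega)),
    zero_div]
  rw [show (a:ℤ) - b + (b - a - 1 : ℕ) + 1 = 0 by omega, zpow_zero]
  ring

lemma gnum_ne_zero {q : ℝ} (hq : 1 < q) (c n : ℕ) (h : n ≤ c) : gnum q (c:ℤ) n ≠ 0 := by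
  refine Finset.prod_ne_zero_iff.2 fun i hi => zpow_ne_one hq (by omega)

lemma gden_split (q : ℝ) (u t : ℕ) :
    gden q (u + t) = gden q u * gnum q ((u+t:ℕ):ℤ) t := by
  rw [gden, Finset.prod_range_add, ← gden, gnum]
  congr 1
  refine Finset.prod_congr rfl fun p _ => ?_
  congr 2
  push_cast
  ring

lemma gnum_split (q : ℝ) (a : ℤ) (u t : ℕ) :
    gnum q a (u + t) = gnum q (a - t) u * gnum q a t := by
  rw [gnum, Finset.prod_range_add]
  congr 1
  · rw [gnum]
    refine Finset.prod_congr rfl fun p _ => ?_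
    congr 2
    push_cast
    ring
  · rw [gnum]
    refine Finset.prod_congr rfl fun p _ => ?_
    congr 2
    push_cast
    ring

lemma trinomial {q : ℝ} (hq : 1 < q) (a : ℤ) (i t : ℕ) (h : t ≤ i) :
    gbinom q a (i:ℤ) * gbinom q (i:ℤ) (t:ℤ) = gbinom q a (t:ℤ) * gbinom q (a - t) ((i - t : ℕ):ℤ) := by
  obtain ⟨u, rfl⟩ : ∃ u, i = u + t := ⟨i - t, by omega⟩
  rw [show u + t - t = u by omega]
  rw [gbinom_nat, gbinom_nat, gbinom_nat, gbinom_nat,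
    gnum_split q a u t, gden_split q u t]
  have h1 : gnum q ((u+t:ℕ):ℤ) t ≠ 0 := gnum_ne_zero hq (u+t) t (by omega)
  have h2 : gden q u ≠ 0 := gden_ne_zero hq _
  have h3 : gden q t ≠ 0 := gden_ne_zero hq _
  rw [div_mul_div_comm, div_mul_div_comm, div_eq_div_iff (by exact mul_ne_zero (mul_ne_zero h2 h1) h3) (by exact mul_ne_zero h3 h2)]
  ring

lemma choose_two_succ (j:ℕ) : (j+2).choose 2 = (j+1).choose 2 + (j+1) := by
  simp [Nat.choose_succ_succ]; omega

lemma Srec {q : ℝ} (hq : 1 < q) (m n : ℤ) (s : ℕ) :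
    ∑ j ∈ Finset.range (s+1), (-1:ℝ)^j * q^((j:ℤ)*(n - (m+1) - s) + ((j+1).choose 2:ℤ))
        * gbinom q (m+1) (j:ℤ) * gbinom q (n-(j:ℤ)) ((s:ℤ)-(j:ℤ))
    = ∑ j ∈ Finset.range (s+1), (-1:ℝ)^j * q^((j:ℤ)*(n - 1 - m - s) + ((j+1).choose 2:ℤ))
        * gbinom q m (j:ℤ) * gbinom q (n-1-(j:ℤ)) ((s:ℤ)-(j:ℤ)) := by
  have hq0 : q ≠ 0 := by positivity
  set E : ℕ → ℤ := fun j => (j:ℤ)*(n - (m+1) - s) + ((j+1).choose 2:ℤ) with hE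
  set g : ℕ → ℝ := fun j => (-1:ℝ)^j * (q^(E j) * q^(m+1-(j:ℤ)))
      * gbinom q m ((j:ℤ)-1) * gbinom q (n-(j:ℤ)) ((s:ℤ)-(j:ℤ)) with hg
  have key : ∀ j ∈ Finset.range (s+1),
      (-1:ℝ)^j * q^(E j) * gbinom q (m+1) (j:ℤ) * gbinom q (n-(j:ℤ)) ((s:ℤ)-(j:ℤ))
      = (-1:ℝ)^j * q^((j:ℤ)*(n - 1 - m - s) + ((j+1).choose 2:ℤ))
          * gbinom q m (j:ℤ) * gbinom q (n-1-(j:ℤ)) ((s:ℤ)-(j:ℤ)) + (g j - g (j+1)) := by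
    intro j hj
    have hjs : (j:ℤ) ≤ s := by
      have := Finset.mem_range.1 hj; omega
    have hEeq : (j:ℤ)*(n - 1 - m - s) + ((j+1).choose 2:ℤ) = E j := by
      simp only [hE]; ring
    rw [hEeq]
    have p1 : gbinom q (m+1) (j:ℤ) = gbinom q m (j:ℤ) + q^(m+1-(j:ℤ)) * gbinom q m ((j:ℤ)-1) := by
      have h := pascal hq (m+1) (j:ℤ) (by omega)
      rw [show m+1-1 = m by ring] at h
      exact h
    have p2 : gbinom q (n-(j:ℤ)) ((s:ℤ)-(j:ℤ))
        = gbinom q (n-1-(j:ℤ)) ((s:ℤ)-(j:ℤ)) + q^(n-(s:ℤ)) * gbinom q (n-1-(j:ℤ)) ((s:ℤ)-(j:ℤ)-1) := by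
      have h := pascal hq (n-(j:ℤ)) ((s:ℤ)-(j:ℤ)) (by omega)
      rw [show n-(j:ℤ)-((s:ℤ)-(j:ℤ)) = n - (s:ℤ) by ring, show n-(j:ℤ)-1 = n-1-(j:ℤ) by ring] at h
      exact h
    have hgj1 : g (j+1) = -((-1:ℝ)^j * (q^(E j) * q^(n-(s:ℤ)))
        * gbinom q m (j:ℤ) * gbinom q (n-1-(j:ℤ)) ((s:ℤ)-(j:ℤ)-1)) := by
      simp only [hg]
      rw [show (((j+1:ℕ)):ℤ)-1 = (j:ℤ) by push_cast; ring,
        show n-(((j+1:ℕ)):ℤ) = n-1-(j:ℤ) by push_cast; ring,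
        show (s:ℤ)-(((j+1:ℕ)):ℤ) = (s:ℤ)-(j:ℤ)-1 by push_cast; ring,
        pow_succ]
      have : q^(E (j+1)) * q^(m+1-((j+1:ℕ):ℤ)) = q^(E j) * q^(n-(s:ℤ)) := by
        rw [← zpow_add₀ hq0, ← zpow_add₀ hq0]
        congr 1
        simp only [hE]
        push_cast [choose_two_succ]
        ring
      rw [this]
      ring
    rw [hgj1]
    simp only [hg]
    rw [p1, p2]
    ring
  rw [Finset.sum_congr rfl key, Finset.sum_add_distrib, Finset.sum_range_sub' g]
  have hg0 : g 0 = 0 := by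
    simp only [hg]
    rw [show ((0:ℕ):ℤ)-1 = -1 by norm_num, gbinom_neg q m (-1) (by norm_num)]
    ring
  have hgs : g (s+1) = 0 := by
    simp only [hg]
    rw [show (s:ℤ)-((s+1:ℕ):ℤ) = -1 by push_cast; ring, gbinom_neg q _ (-1) (by norm_num)]
    ring
  rw [hg0, hgs]
  ring

lemma Slem {q : ℝ} (hq : 1 < q) (m : ℕ) : ∀ (n : ℤ) (s : ℕ),
    ∑ j ∈ Finset.range (s+1), (-1:ℝ)^j * q^((j:ℤ)*(n - (m:ℤ) - s) + ((j+1).choose 2:ℤ))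
        * gbinom q (m:ℤ) (j:ℤ) * gbinom q (n-(j:ℤ)) ((s:ℤ)-(j:ℤ))
    = gbinom q (n - (m:ℤ)) (s:ℤ) := by
  induction m with
  | zero =>
    intro n s
    rw [Finset.sum_eq_single 0]
    · norm_num [gbinom_zero]
    · intro j hj hj0
      have h0 := gbinom_eq_zero q 0 j (by omega)
      norm_num at h0
      simp [h0]
    · intro h
      exact absurd (Finset.mem_range.2 (by omega)) h
  | succ m ih =>
    intro n s
    have step : ∑ j ∈ Finset.range (s+1), (-1:ℝ)^j * q^((j:ℤ)*(n - ((m+1:ℕ):ℤ) - s) + ((j+1).choose 2:ℤ))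
        * gbinom q ((m+1:ℕ):ℤ) (j:ℤ) * gbinom q (n-(j:ℤ)) ((s:ℤ)-(j:ℤ))
        = ∑ j ∈ Finset.range (s+1), (-1:ℝ)^j * q^((j:ℤ)*(n - ((m:ℤ)+1) - s) + ((j+1).choose 2:ℤ))
        * gbinom q ((m:ℤ)+1) (j:ℤ) * gbinom q (n-(j:ℤ)) ((s:ℤ)-(j:ℤ)) := by
      refine Finset.sum_congr rfl fun j _ => ?_
      rw [show ((m+1:ℕ):ℤ) = (m:ℤ)+1 by push_cast; ring]
    rw [step, Srec hq (m:ℤ) n s, ih (n-1) s]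
    congr 1
    push_cast
    ring

theorem stmt13 (q : ℝ) (hq : 1 < q) (k r t x : ℕ) (htr : t ≤ r) :
    gbinom q x t * gbinom q ((k : ℤ) - x) ((r : ℤ) - t) =
      ∑ i ∈ Finset.Icc t r,
        (-1 : ℝ) ^ (i - t) *
          q ^ (((i : ℤ) - t) * ((k : ℤ) - x - r + t) + ((i - t + 1).choose 2 : ℤ)) *
          gbinom q i t * gbinom q ((k : ℤ) - i) ((r : ℤ) - i) * gbinom q x i := by
  by_cases hxt : x < t
  · rw [gbinom_eq_zero q x t hxt, zero_mul]
    refine (Finset.sum_eq_zero fun i hi => ?_).symm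
    rw [gbinom_eq_zero q x i (by have := (Finset.mem_Icc.1 hi).1; omega)]
    ring
  · push_neg at hxt
    have step1 : ∀ i ∈ Finset.Icc t r,
        (-1 : ℝ) ^ (i - t) *
          q ^ (((i : ℤ) - t) * ((k : ℤ) - x - r + t) + ((i - t + 1).choose 2 : ℤ)) *
          gbinom q i t * gbinom q ((k : ℤ) - i) ((r : ℤ) - i) * gbinom q x i
        = gbinom q (x:ℤ) (t:ℤ) * ((-1 : ℝ) ^ (i - t) *
          q ^ (((i : ℤ) - t) * ((k : ℤ) - x - r + t) + ((i - t + 1).choose 2 : ℤ)) *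
          gbinom q ((x:ℤ) - (t:ℤ)) ((i - t : ℕ):ℤ) * gbinom q ((k : ℤ) - i) ((r : ℤ) - i)) := by
      intro i hi
      have hti : t ≤ i := (Finset.mem_Icc.1 hi).1
      have h := trinomial hq (x:ℤ) i t hti
      calc (-1 : ℝ) ^ (i - t) *
          q ^ (((i : ℤ) - t) * ((k : ℤ) - x - r + t) + ((i - t + 1).choose 2 : ℤ)) *
          gbinom q i t * gbinom q ((k : ℤ) - i) ((r : ℤ) - i) * gbinom q x i
          = (-1 : ℝ) ^ (i - t) *
          q ^ (((i : ℤ) - t) * ((k : ℤ) - x - r + t) + ((i - t + 1).choose 2 : ℤ)) *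
          gbinom q ((k : ℤ) - i) ((r : ℤ) - i) * (gbinom q (x:ℤ) (i:ℤ) * gbinom q (i:ℤ) (t:ℤ)) := by
            ring
        _ = _ := by rw [h]; ring
    rw [Finset.sum_congr rfl step1, ← Finset.mul_sum]
    have reindex : ∀ f : ℕ → ℝ, ∑ i ∈ Finset.Icc t r, f i = ∑ j ∈ Finset.range (r - t + 1), f (t + j) := by
      intro f
      rw [← Finset.Ico_add_one_right_eq_Icc, Finset.sum_Ico_eq_sum_range, show r + 1 - t = r - t + 1 by omega]
    rw [reindex]
    have step2 : ∀ j ∈ Finset.range (r - t + 1),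
        (-1 : ℝ) ^ (t + j - t) *
          q ^ ((((t+j:ℕ) : ℤ) - (t:ℤ)) * ((k : ℤ) - x - r + t) + ((t + j - t + 1).choose 2 : ℤ)) *
          gbinom q ((x:ℤ) - (t:ℤ)) ((t + j - t : ℕ):ℤ) * gbinom q ((k : ℤ) - (t+j:ℕ)) ((r : ℤ) - (t+j:ℕ))
        = (-1:ℝ)^j * q^((j:ℤ)*(((k:ℤ) - (t:ℤ)) - ((x - t : ℕ):ℤ) - (r - t:ℕ)) + ((j+1).choose 2:ℤ))
          * gbinom q ((x - t:ℕ):ℤ) (j:ℤ) * gbinom q (((k:ℤ) - (t:ℤ))-(j:ℤ)) (((r - t:ℕ):ℤ)-(j:ℤ)) := by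
      intro j hj
      rw [show t + j - t = j by omega,
        show ((t+j:ℕ) : ℤ) - (t:ℤ) = (j:ℤ) by push_cast; ring,
        show (k : ℤ) - (x:ℤ) - (r:ℤ) + (t:ℤ) = ((k:ℤ) - (t:ℤ)) - ((x - t : ℕ):ℤ) - ((r - t:ℕ):ℤ) by omega,
        show (x:ℤ) - (t:ℤ) = ((x - t:ℕ):ℤ) by omega,
        show (k : ℤ) - ((t+j:ℕ):ℤ) = ((k:ℤ) - (t:ℤ))-(j:ℤ) by push_cast; ring,
        show (r : ℤ) - ((t+j:ℕ):ℤ) = ((r - t:ℕ):ℤ)-(j:ℤ) by omega]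
    rw [show r - t + 1 = (r-t) + 1 from rfl, Finset.sum_congr rfl step2,
      Slem hq (x-t) ((k:ℤ) - (t:ℤ)) (r-t)]
    rw [show ((k:ℤ) - (t:ℤ)) - ((x - t:ℕ):ℤ) = (k:ℤ) - (x:ℤ) by omega,
      show ((r - t:ℕ):ℤ) = (r:ℤ) - (t:ℤ) by omega]
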